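/- In the margin condition setting (see context), define the indicator-form projection Π_{C*}(x) = Σ_{j=1}^k c*_j·𝟙{ζ_j(x) > 0}, which equals the nearest center of x when x has a unique nearest center. Then there exists a constant c, depending only on B, k, p, α, L and κ, such that for every coordinate a ∈ {1,…,p}: E|[Π_{C*}(μ̂)]_a − [Π_{C*}(μ)]_a| ≤ c·( max_{1≤j≤k} ‖𝟙{ζ_j(μ̂) > 0} − 𝟙{ζ_j(μ) > 0}‖_∞ · Σ_{a'=1}^p E|μ̂_{a'} − μ_{a'}| + Σ_{a'=1}^p ‖μ̂_{a'} − μ_{a'}‖_∞^α ). -/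

import Mathlib

open MeasureTheory

/-- `ζ_j(x) = min_{i≠j} ‖x − c*_i‖₂ − ‖x − c*_j‖₂`. -/
noncomputable def zeta {p k : ℕ} (Cs : Fin k → EuclideanSpace ℝ (Fin p)) (j : Fin k)
    (x : EuclideanSpace ℝ (Fin p)) : ℝ :=
  (⨅ i : {i : Fin k // i ≠ j}, ‖x - Cs i.1‖) - ‖x - Cs j‖

/-- The margin neighborhood `N_{C*}(t) = ⋃_j {x ∈ V_j(C*) : |ζ_j(x)| ≤ t}` of the Voronoi
boundary of the codebook `C*`. -/
def marginSet {p k : ℕ} (Cs : Fin k → EuclideanSpace ℝ (Fin p)) (t : ℝ) :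
    Set (EuclideanSpace ℝ (Fin p)) :=
  {x | ∃ j, (∀ i, ‖x - Cs j‖ ≤ ‖x - Cs i‖) ∧ |zeta Cs j x| ≤ t}

/-- The essential supremum norm `‖f‖_∞` of a real random variable. -/
noncomputable def linf {Ω : Type*} {m : MeasurableSpace Ω} (P : Measure Ω) (f : Ω → ℝ) : ℝ :=
  essSup (fun ω => |f ω|) P

section Aux

open Filter

variable {p k : ℕ}

lemma stmt11_bddBelow (Cs : Fin k → EuclideanSpace ℝ (Fin p)) (j : Fin k)
    (x : EuclideanSpace ℝ (Fin p)) :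
    BddBelow (Set.range fun i : {i : Fin k // i ≠ j} => ‖x - Cs i.1‖) := by
  refine ⟨0, ?_⟩
  rintro _ ⟨i, rfl⟩
  positivity

lemma stmt11_iInf_lip (Cs : Fin k → EuclideanSpace ℝ (Fin p)) (j : Fin k)
    (x y : EuclideanSpace ℝ (Fin p)) :
    (⨅ i : {i : Fin k // i ≠ j}, ‖x - Cs i.1‖) ≤
      (⨅ i : {i : Fin k // i ≠ j}, ‖y - Cs i.1‖) + ‖x - y‖ := by
  rcases isEmpty_or_nonempty {i : Fin k // i ≠ j} with h | h
  · rw [Real.iInf_of_isEmpty, Real.iInf_of_isEmpty]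
    positivity
  · rw [← sub_le_iff_le_add]
    refine le_ciInf fun i => ?_
    rw [sub_le_iff_le_add]
    calc (⨅ i : {i : Fin k // i ≠ j}, ‖x - Cs i.1‖) ≤ ‖x - Cs i.1‖ :=
          ciInf_le (stmt11_bddBelow Cs j x) i
    _ = ‖(x - y) + (y - Cs i.1)‖ := by rw [sub_add_sub_cancel]
    _ ≤ ‖x - y‖ + ‖y - Cs i.1‖ := norm_add_le _ _
    _ = ‖y - Cs i.1‖ + ‖x - y‖ := by ring

lemma stmt11_zeta_sub_le (Cs : Fin k → EuclideanSpace ℝ (Fin p)) (j : Fin k)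
    (x y : EuclideanSpace ℝ (Fin p)) :
    zeta Cs j x - zeta Cs j y ≤ 2 * ‖x - y‖ := by
  have h1 := stmt11_iInf_lip Cs j x y
  have h2 : ‖y - Cs j‖ - ‖x - Cs j‖ ≤ ‖y - x‖ := by
    have := norm_sub_norm_le (y - Cs j) (x - Cs j)
    rwa [sub_sub_sub_cancel_right] at this
  have h3 : ‖y - x‖ = ‖x - y‖ := norm_sub_rev _ _
  unfold zeta
  linarith

lemma stmt11_zeta_dist (Cs : Fin k → EuclideanSpace ℝ (Fin p)) (j : Fin k)
    (x y : EuclideanSpace ℝ (Fin p)) :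
    |zeta Cs j x - zeta Cs j y| ≤ 2 * ‖x - y‖ := by
  rw [abs_le]
  constructor
  · have := stmt11_zeta_sub_le Cs j y x
    rw [norm_sub_rev] at this
    linarith
  · exact stmt11_zeta_sub_le Cs j x y

lemma stmt11_zeta_continuous (Cs : Fin k → EuclideanSpace ℝ (Fin p)) (j : Fin k) :
    Continuous (zeta Cs j) := by
  have : LipschitzWith 2 (zeta Cs j) := by
    apply LipschitzWith.of_dist_le_mul
    intro x y
    rw [Real.dist_eq, dist_eq_norm]
    simpa using stmt11_zeta_dist Cs j x y
  exact this.continuous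

lemma stmt11_zeta_nonpos (Cs : Fin k → EuclideanSpace ℝ (Fin p)) (j : Fin k)
    (he : IsEmpty {i : Fin k // i ≠ j}) (x : EuclideanSpace ℝ (Fin p)) :
    zeta Cs j x ≤ 0 := by
  unfold zeta
  rw [Real.iInf_of_isEmpty]
  have : 0 ≤ ‖x - Cs j‖ := norm_nonneg _
  linarith

lemma stmt11_flip_mem_margin (hk : 0 < k) (Cs : Fin k → EuclideanSpace ℝ (Fin p))
    (x y : EuclideanSpace ℝ (Fin p)) (d : ℝ) (hxy : ‖y - x‖ ≤ d) (j : Fin k)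
    (h : ¬ ((0 < zeta Cs j y) ↔ (0 < zeta Cs j x))) :
    x ∈ marginSet Cs (2 * d) := by
  have hd0 : 0 ≤ d := le_trans (norm_nonneg _) hxy
  have key : ∀ j₀ : Fin k, zeta Cs j₀ x - zeta Cs j₀ y ≤ 2 * d := by
    intro j₀
    have h1 := stmt11_zeta_sub_le Cs j₀ x y
    have h2 : ‖x - y‖ ≤ d := by rw [norm_sub_rev]; exact hxy
    linarith
  have hpos : 0 < zeta Cs j y ∨ 0 < zeta Cs j x := by tauto
  haveI : Nonempty (Fin k) := ⟨⟨0, hk⟩⟩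
  obtain ⟨j', hj'⟩ := Finite.exists_min fun i => ‖x - Cs i‖
  have hne : Nonempty {i : Fin k // i ≠ j} := by
    rcases isEmpty_or_nonempty {i : Fin k // i ≠ j} with he | he
    · exfalso
      rcases hpos with hp | hp
      · exact absurd hp (not_lt.2 (stmt11_zeta_nonpos Cs j he y))
      · exact absurd hp (not_lt.2 (stmt11_zeta_nonpos Cs j he x))
    · exact he
  haveI hne' : Nonempty {i : Fin k // i ≠ j'} := by
    obtain ⟨⟨i₁, hi₁⟩⟩ := hne
    rcases eq_or_ne i₁ j' with rfl | hh
    · exact ⟨⟨j, fun hc => hi₁ hc.symm⟩⟩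
    · exact ⟨⟨i₁, hh⟩⟩
  have hz0 : 0 ≤ zeta Cs j' x := by
    have h1 : ‖x - Cs j'‖ ≤ ⨅ i : {i : Fin k // i ≠ j'}, ‖x - Cs i.1‖ :=
      le_ciInf fun i => hj' i.1
    unfold zeta
    linarith
  refine ⟨j', hj', ?_⟩
  rw [abs_le]
  refine ⟨by linarith, ?_⟩
  by_cases hcx : 0 < zeta Cs j x
  · have hcy : zeta Cs j y ≤ 0 := not_lt.1 (by tauto)
    have hjj : j' = j := by
      by_contra hjj
      have h1 : (⨅ i : {i : Fin k // i ≠ j}, ‖x - Cs i.1‖) ≤ ‖x - Cs j'‖ :=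
        ciInf_le (stmt11_bddBelow Cs j x) ⟨j', hjj⟩
      have h2 : ‖x - Cs j'‖ ≤ ‖x - Cs j‖ := hj' j
      unfold zeta at hcx
      linarith
    subst hjj
    have := key j'
    linarith
  · have hcy : 0 < zeta Cs j y := by tauto
    rcases eq_or_ne j' j with rfl | hjj
    · have : zeta Cs j' x ≤ 0 := not_lt.1 hcx
      linarith
    · have h1 : (⨅ i : {i : Fin k // i ≠ j'}, ‖y - Cs i.1‖) ≤ ‖y - Cs j‖ :=
        ciInf_le (stmt11_bddBelow Cs j' y) ⟨j, Ne.symm hjj⟩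
      have h2 : (⨅ i : {i : Fin k // i ≠ j}, ‖y - Cs i.1‖) ≤ ‖y - Cs j'‖ :=
        ciInf_le (stmt11_bddBelow Cs j y) ⟨j', hjj⟩
      have h3 : zeta Cs j' y ≤ 0 := by
        unfold zeta at hcy ⊢
        linarith
      have := key j'
      linarith

lemma stmt11_norm_le_sum_abs (x : EuclideanSpace ℝ (Fin p)) : ‖x‖ ≤ ∑ a, |x a| := by
  rw [EuclideanSpace.norm_eq]
  have h1 : ∑ a, ‖x a‖ ^ 2 ≤ (∑ a, ‖x a‖) ^ 2 :=
    Finset.sum_sq_le_sq_sum_of_nonneg fun i _ => norm_nonneg _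
  calc Real.sqrt (∑ a, ‖x a‖ ^ 2) ≤ Real.sqrt ((∑ a, ‖x a‖) ^ 2) := Real.sqrt_le_sqrt h1
  _ = ∑ a, ‖x a‖ := Real.sqrt_sq (Finset.sum_nonneg fun _ _ => norm_nonneg _)
  _ = ∑ a, |x a| := by simp [Real.norm_eq_abs]

lemma stmt11_rpow_sum_le {n : ℕ} (g : Fin n → ℝ) (hg : ∀ i, 0 ≤ g i) {α : ℝ} (hα : 0 < α) :
    (∑ i, g i) ^ α ≤ (n : ℝ) ^ α * ∑ i, (g i) ^ α := by
  rcases Nat.eq_zero_or_pos n with rfl | hn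
  · simp [Real.zero_rpow hα.ne']
  · haveI : Nonempty (Fin n) := ⟨⟨0, hn⟩⟩
    obtain ⟨i₀, hi₀⟩ := Finite.exists_max g
    have h1 : ∑ i, g i ≤ (n : ℝ) * g i₀ := by
      calc ∑ i, g i ≤ Finset.univ.card • g i₀ :=
            Finset.sum_le_card_nsmul _ _ _ fun i _ => hi₀ i
      _ = (n : ℝ) * g i₀ := by simp [nsmul_eq_mul]
    calc (∑ i, g i) ^ α ≤ ((n : ℝ) * g i₀) ^ α :=
          Real.rpow_le_rpow (Finset.sum_nonneg fun i _ => hg i) h1 hα.le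
    _ = (n : ℝ) ^ α * (g i₀) ^ α := Real.mul_rpow (by positivity) (hg i₀)
    _ ≤ (n : ℝ) ^ α * ∑ i, (g i) ^ α := by
        apply mul_le_mul_of_nonneg_left _ (Real.rpow_nonneg (by positivity) α)
        exact Finset.single_le_sum (fun i _ => Real.rpow_nonneg (hg i) α) (Finset.mem_univ i₀)

lemma stmt11_linf_nonneg {Ω : Type} {m : MeasurableSpace Ω} (P : Measure Ω)
    [IsProbabilityMeasure P] (f : Ω → ℝ) : 0 ≤ linf P f := by
  haveI : (ae P).NeBot := ae_neBot.2 (IsProbabilityMeasure.ne_zero P)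
  rw [linf, essSup, Filter.limsup_eq]
  apply Real.sInf_nonneg
  intro b hb
  simp only [Set.mem_setOf_eq] at hb
  obtain ⟨ω, hω⟩ := hb.exists
  exact le_trans (abs_nonneg (f ω)) hω

lemma stmt11_ae_abs_le_linf {Ω : Type} {m : MeasurableSpace Ω} (P : Measure Ω)
    (f : Ω → ℝ) (C : ℝ) (hf : ∀ᵐ ω ∂P, |f ω| ≤ C) : ∀ᵐ ω ∂P, |f ω| ≤ linf P f := by
  rw [linf]
  exact ae_le_essSup ⟨C, Filter.eventually_map.2 hf⟩

end Aux

set_option maxHeartbeats 1000000 in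
/-- Under the margin condition with radius `κ`, exponent `α` and constant
`L`, there is a constant `c` depending only on `B, k, p, α, L, κ` such that, for the
indicator-form projection `Π_{C*}(x) = Σ_j c*_j·𝟙{ζ_j(x) > 0}` and every coordinate `a`,
`E|[Π_{C*}(μ̂)]_a − [Π_{C*}(μ)]_a| ≤ c·( max_j ‖𝟙{ζ_j(μ̂) > 0} − 𝟙{ζ_j(μ) > 0}‖_∞ ·
Σ_{a'} E|μ̂_{a'} − μ_{a'}| + Σ_{a'} ‖μ̂_{a'} − μ_{a'}‖_∞^α )`. -/
theorem stmt_11 (B : ℝ) (hB : 0 < B) (k p : ℕ) (hk : 0 < k) (α L κ : ℝ)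
    (hα : 0 < α) (hL : 0 < L) (hκ : 0 < κ) :
    ∃ c : ℝ, 0 ≤ c ∧
      ∀ (Ω : Type) (m0 : MeasurableSpace Ω) (P : Measure Ω), IsProbabilityMeasure P →
      ∀ μv μh : Ω → EuclideanSpace ℝ (Fin p),
        (∀ a, Measurable fun ω => μv ω a) → (∀ a, Measurable fun ω => μh ω a) →
        (∀ a, ∀ᵐ ω ∂P, |μv ω a| ≤ B) → (∀ a, ∀ᵐ ω ∂P, |μh ω a| ≤ B) →
      ∀ Cs : Fin k → EuclideanSpace ℝ (Fin p), (∀ j a, |Cs j a| ≤ B) →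
      (∀ t : ℝ, 0 ≤ t → t ≤ κ →
        P {ω | μv ω ∈ marginSet Cs t} ≤ ENNReal.ofReal (L * t ^ α)) →
      ∀ a : Fin p,
        ∫ ω, |(∑ j, (if 0 < zeta Cs j (μh ω) then (1 : ℝ) else 0) * Cs j a) -
              (∑ j, (if 0 < zeta Cs j (μv ω) then (1 : ℝ) else 0) * Cs j a)| ∂P ≤
          c * ((⨆ j, linf P fun ω =>
                  (if 0 < zeta Cs j (μh ω) then (1 : ℝ) else 0) -
                    (if 0 < zeta Cs j (μv ω) then (1 : ℝ) else 0)) *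
                (∑ a' : Fin p, ∫ ω, |μh ω a' - μv ω a'| ∂P) +
              ∑ a' : Fin p, (linf P fun ω => μh ω a' - μv ω a') ^ α) := by
  have hY0 : (0:ℝ) ≤ (2 * (p:ℝ) / κ) ^ α :=
    Real.rpow_nonneg (div_nonneg (by positivity) hκ.le) α
  have hX0 : (0:ℝ) ≤ L * (2:ℝ) ^ α * (p:ℝ) ^ α := by
    have := Real.rpow_nonneg (by norm_num : (0:ℝ) ≤ 2) α
    have := Real.rpow_nonneg (by positivity : (0:ℝ) ≤ (p:ℝ)) α
    positivity
  refine ⟨(k:ℝ) * B * (L * (2:ℝ) ^ α * (p:ℝ) ^ α + (2 * (p:ℝ) / κ) ^ α), by positivity, ?_⟩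
  intro Ω m0 P hP μv μh hmv hmh hBv hBh Cs hCs hmargin a
  -- abbreviations
  set M := ⨆ j, linf P fun ω =>
      (if 0 < zeta Cs j (μh ω) then (1 : ℝ) else 0) -
        (if 0 < zeta Cs j (μv ω) then (1 : ℝ) else 0) with hMdef
  set S := ∑ a' : Fin p, ∫ ω, |μh ω a' - μv ω a'| ∂P with hSdef
  set T := ∑ a' : Fin p, (linf P fun ω => μh ω a' - μv ω a') ^ α with hTdef
  set D := ∑ a' : Fin p, linf P fun ω => μh ω a' - μv ω a' with hDdef
  have hlin0 : ∀ a' : Fin p, 0 ≤ linf P fun ω => μh ω a' - μv ω a' :=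
    fun a' => stmt11_linf_nonneg P _
  have hD0 : 0 ≤ D := Finset.sum_nonneg fun a' _ => hlin0 a'
  have hT0 : 0 ≤ T := Finset.sum_nonneg fun a' _ => Real.rpow_nonneg (hlin0 a') α
  have hM0 : 0 ≤ M := Real.iSup_nonneg fun j => stmt11_linf_nonneg P _
  have hS0 : 0 ≤ S := Finset.sum_nonneg fun a' _ => integral_nonneg fun ω => abs_nonneg _
  have hMS0 : 0 ≤ M * S := mul_nonneg hM0 hS0
  have hkB0 : (0:ℝ) ≤ (k:ℝ) * B := by positivity
  -- measurability
  have hmv' : Measurable μv := (WithLp.measurable_toLp 2 _).comp (measurable_pi_iff.2 hmv)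
  have hmh' : Measurable μh := (WithLp.measurable_toLp 2 _).comp (measurable_pi_iff.2 hmh)
  have hzv : ∀ j, Measurable fun ω => zeta Cs j (μv ω) :=
    fun j => (stmt11_zeta_continuous Cs j).measurable.comp hmv'
  have hzh : ∀ j, Measurable fun ω => zeta Cs j (μh ω) :=
    fun j => (stmt11_zeta_continuous Cs j).measurable.comp hmh'
  have hAh : ∀ j, MeasurableSet {ω | 0 < zeta Cs j (μh ω)} :=
    fun j => measurableSet_lt measurable_const (hzh j)
  have hAv : ∀ j, MeasurableSet {ω | 0 < zeta Cs j (μv ω)} :=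
    fun j => measurableSet_lt measurable_const (hzv j)
  set E : Set Ω := {ω | ∃ j, ¬ ((0 < zeta Cs j (μh ω)) ↔ (0 < zeta Cs j (μv ω)))} with hEdef
  have hE : MeasurableSet E := by
    have hEeq : E = ⋃ j, (({ω | 0 < zeta Cs j (μh ω)} \ {ω | 0 < zeta Cs j (μv ω)}) ∪
        ({ω | 0 < zeta Cs j (μv ω)} \ {ω | 0 < zeta Cs j (μh ω)})) := by
      ext ω
      simp only [hEdef, Set.mem_iUnion, Set.mem_union, Set.mem_diff, Set.mem_setOf_eq]
      constructor
      · rintro ⟨j, hj⟩; exact ⟨j, by tauto⟩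
      · rintro ⟨j, hj⟩; exact ⟨j, by tauto⟩
    rw [hEeq]
    exact MeasurableSet.iUnion fun j =>
      (((hAh j).diff (hAv j)).union ((hAv j).diff (hAh j)))
  -- pointwise bound by indicator
  have hfb : ∀ ω, |(∑ j, (if 0 < zeta Cs j (μh ω) then (1 : ℝ) else 0) * Cs j a) -
      (∑ j, (if 0 < zeta Cs j (μv ω) then (1 : ℝ) else 0) * Cs j a)| ≤
      E.indicator (fun _ => (k:ℝ) * B) ω := by
    intro ω
    by_cases hω : ω ∈ E
    · rw [Set.indicator_of_mem hω, ← Finset.sum_sub_distrib]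
      calc |∑ j, ((if 0 < zeta Cs j (μh ω) then (1 : ℝ) else 0) * Cs j a -
            (if 0 < zeta Cs j (μv ω) then (1 : ℝ) else 0) * Cs j a)| ≤
          ∑ j, |(if 0 < zeta Cs j (μh ω) then (1 : ℝ) else 0) * Cs j a -
            (if 0 < zeta Cs j (μv ω) then (1 : ℝ) else 0) * Cs j a| :=
            Finset.abs_sum_le_sum_abs _ _
      _ ≤ ∑ _j : Fin k, B := by
          apply Finset.sum_le_sum
          intro j _
          rw [← sub_mul, abs_mul]
          have h1 : |(if 0 < zeta Cs j (μh ω) then (1 : ℝ) else 0) -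
              (if 0 < zeta Cs j (μv ω) then (1 : ℝ) else 0)| ≤ 1 := by
            split_ifs <;> norm_num
          calc |(if 0 < zeta Cs j (μh ω) then (1 : ℝ) else 0) -
              (if 0 < zeta Cs j (μv ω) then (1 : ℝ) else 0)| * |Cs j a| ≤ 1 * B :=
              mul_le_mul h1 (hCs j a) (abs_nonneg _) zero_le_one
          _ = B := one_mul B
      _ = (k:ℝ) * B := by simp [Finset.sum_const, nsmul_eq_mul]
    · rw [Set.indicator_of_notMem hω]
      have hiff : ∀ j, (0 < zeta Cs j (μh ω)) ↔ (0 < zeta Cs j (μv ω)) := by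
        intro j
        by_contra hc
        exact hω ⟨j, hc⟩
      have hsum : (∑ j, (if 0 < zeta Cs j (μh ω) then (1 : ℝ) else 0) * Cs j a) =
          ∑ j, (if 0 < zeta Cs j (μv ω) then (1 : ℝ) else 0) * Cs j a :=
        Finset.sum_congr rfl fun j _ => by rw [if_congr (hiff j) rfl rfl]
      rw [hsum, sub_self, abs_zero]
  -- integrability
  have hmeasf : Measurable fun ω =>
      |(∑ j, (if 0 < zeta Cs j (μh ω) then (1 : ℝ) else 0) * Cs j a) -
        (∑ j, (if 0 < zeta Cs j (μv ω) then (1 : ℝ) else 0) * Cs j a)| := by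
    apply Measurable.abs
    apply Measurable.sub <;>
    · apply Finset.measurable_sum
      intro j _
      exact (Measurable.ite (by first | exact hAh j | exact hAv j)
        measurable_const measurable_const).mul_const _
  have hint1 : Integrable (fun ω =>
      |(∑ j, (if 0 < zeta Cs j (μh ω) then (1 : ℝ) else 0) * Cs j a) -
        (∑ j, (if 0 < zeta Cs j (μv ω) then (1 : ℝ) else 0) * Cs j a)|) P := by
    apply Integrable.mono' (integrable_const ((k:ℝ) * B)) hmeasf.aestronglyMeasurable
    refine Filter.Eventually.of_forall fun ω => ?_
    rw [Real.norm_eq_abs, abs_abs]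
    refine (hfb ω).trans ?_
    by_cases hω : ω ∈ E
    · rw [Set.indicator_of_mem hω]
    · rw [Set.indicator_of_notMem hω]; positivity
  have hint2 : Integrable (E.indicator fun _ => (k:ℝ) * B) P :=
    (integrable_const _).indicator hE
  have hIle : (∫ ω, |(∑ j, (if 0 < zeta Cs j (μh ω) then (1 : ℝ) else 0) * Cs j a) -
      (∑ j, (if 0 < zeta Cs j (μv ω) then (1 : ℝ) else 0) * Cs j a)| ∂P) ≤
      (P E).toReal * ((k:ℝ) * B) := by
    have h := integral_mono_ae hint1 hint2 (Filter.Eventually.of_forall hfb)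
    rwa [integral_indicator_const _ hE, smul_eq_mul] at h
  -- a.e. coordinate bounds
  have haeb : ∀ a' : Fin p, ∀ᵐ ω ∂P, |μh ω a' - μv ω a'| ≤
      linf P fun ω => μh ω a' - μv ω a' := by
    intro a'
    apply stmt11_ae_abs_le_linf P _ (2 * B)
    filter_upwards [hBv a', hBh a'] with ω h1 h2
    calc |μh ω a' - μv ω a'| ≤ |μh ω a'| + |μv ω a'| := abs_sub _ _
    _ ≤ 2 * B := by linarith
  have haenorm : ∀ᵐ ω ∂P, ‖μh ω - μv ω‖ ≤ D := by
    have haeAll : ∀ᵐ ω ∂P, ∀ a' : Fin p, |μh ω a' - μv ω a'| ≤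
        linf P fun ω => μh ω a' - μv ω a' := (ae_all_iff).2 haeb
    filter_upwards [haeAll] with ω hω
    calc ‖μh ω - μv ω‖ ≤ ∑ a', |(μh ω - μv ω) a'| := stmt11_norm_le_sum_abs _
    _ = ∑ a', |μh ω a' - μv ω a'| := by
        exact Finset.sum_congr rfl fun a' _ => rfl
    _ ≤ D := Finset.sum_le_sum fun a' _ => hω a'
  have hPE : P E ≤ P {ω | μv ω ∈ marginSet Cs (2 * D)} := by
    apply measure_mono_ae
    filter_upwards [haenorm] with ω hn hωE
    obtain ⟨j, hj⟩ := hωE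
    exact stmt11_flip_mem_margin hk Cs (μv ω) (μh ω) D hn j hj
  -- final bound
  have hDT : D ^ α ≤ (p:ℝ) ^ α * T := by
    rw [hDdef, hTdef]
    simpa using stmt11_rpow_sum_le (fun a' => linf P fun ω => μh ω a' - μv ω a') hlin0 hα
  have hfinal : (P E).toReal * ((k:ℝ) * B) ≤
      ((k:ℝ) * B * (L * (2:ℝ) ^ α * (p:ℝ) ^ α + (2 * (p:ℝ) / κ) ^ α)) * (M * S + T) := by
    rcases le_or_gt (2 * D) κ with hc | hc
    · have hPE2 : (P E).toReal ≤ L * (2 * D) ^ α := by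
        apply ENNReal.toReal_le_of_le_ofReal
        · have := Real.rpow_nonneg (by linarith : (0:ℝ) ≤ 2 * D) α
          positivity
        · exact hPE.trans (hmargin (2 * D) (by linarith) hc)
      have h2 : (2 * D) ^ α ≤ (2:ℝ) ^ α * ((p:ℝ) ^ α * T) := by
        rw [Real.mul_rpow (by norm_num) hD0]
        exact mul_le_mul_of_nonneg_left hDT (Real.rpow_nonneg (by norm_num) α)
      have h3 : (P E).toReal * ((k:ℝ) * B) ≤ ((k:ℝ) * B) * (L * ((2:ℝ) ^ α * ((p:ℝ) ^ α * T))) := by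
        rw [mul_comm]
        apply mul_le_mul_of_nonneg_left _ hkB0
        exact hPE2.trans (mul_le_mul_of_nonneg_left h2 hL.le)
      refine h3.trans ?_
      nlinarith [mul_nonneg hkB0 (mul_nonneg hX0 hMS0), mul_nonneg hkB0 (mul_nonneg hY0 hMS0),
        mul_nonneg hkB0 (mul_nonneg hY0 hT0)]
    · have hp : 0 < p := by
        rcases Nat.eq_zero_or_pos p with rfl | hp
        · exfalso
          rw [hDdef] at hc
          simp at hc
          linarith
        · exact hp
      haveI : Nonempty (Fin p) := ⟨⟨0, hp⟩⟩
      obtain ⟨a₀, ha₀⟩ := Finite.exists_max fun a' => linf P fun ω => μh ω a' - μv ω a'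
      have hDla : D ≤ (p:ℝ) * linf P fun ω => μh ω a₀ - μv ω a₀ := by
        rw [hDdef]
        calc (∑ a' : Fin p, linf P fun ω => μh ω a' - μv ω a') ≤
            Finset.univ.card • linf P fun ω => μh ω a₀ - μv ω a₀ :=
              Finset.sum_le_card_nsmul _ _ _ fun i _ => ha₀ i
        _ = (p:ℝ) * linf P fun ω => μh ω a₀ - μv ω a₀ := by simp [nsmul_eq_mul]
      have hp' : (0:ℝ) < (p:ℝ) := by exact_mod_cast hp
      have hl0 : κ / (2 * (p:ℝ)) ≤ linf P fun ω => μh ω a₀ - μv ω a₀ := by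
        rw [div_le_iff₀ (by positivity)]
        linarith
      have hTlb : (κ / (2 * (p:ℝ))) ^ α ≤ T := by
        refine le_trans (Real.rpow_le_rpow (by positivity) hl0 hα.le) ?_
        rw [hTdef]
        exact Finset.single_le_sum (fun i _ => Real.rpow_nonneg (hlin0 i) α)
          (Finset.mem_univ a₀)
      have hone : 1 ≤ (2 * (p:ℝ) / κ) ^ α * T := by
        have hmul : (2 * (p:ℝ) / κ) * (κ / (2 * (p:ℝ))) = 1 := by field_simp
        calc (1:ℝ) = ((2 * (p:ℝ) / κ) * (κ / (2 * (p:ℝ)))) ^ α := by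
              rw [hmul, Real.one_rpow]
        _ = (2 * (p:ℝ) / κ) ^ α * (κ / (2 * (p:ℝ))) ^ α :=
              Real.mul_rpow (div_nonneg (by positivity) hκ.le) (by positivity)
        _ ≤ (2 * (p:ℝ) / κ) ^ α * T := mul_le_mul_of_nonneg_left hTlb hY0
      have hPE1 : (P E).toReal ≤ 1 := by
        have h := ENNReal.toReal_mono (by simp) (prob_le_one (μ := P) (s := E))
        simpa using h
      have h3 : (P E).toReal * ((k:ℝ) * B) ≤ ((k:ℝ) * B) * ((2 * (p:ℝ) / κ) ^ α * T) := by
        calc (P E).toReal * ((k:ℝ) * B) ≤ 1 * ((k:ℝ) * B) :=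
              mul_le_mul_of_nonneg_right hPE1 hkB0
        _ = ((k:ℝ) * B) * 1 := by ring
        _ ≤ ((k:ℝ) * B) * ((2 * (p:ℝ) / κ) ^ α * T) :=
              mul_le_mul_of_nonneg_left hone hkB0
      refine h3.trans ?_
      nlinarith [mul_nonneg hkB0 (mul_nonneg hX0 hMS0), mul_nonneg hkB0 (mul_nonneg hY0 hMS0),
        mul_nonneg hkB0 (mul_nonneg hX0 hT0)]
  exact hIle.trans hfinal
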